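/- Suppose U has finite non-degenerate support, and for each m, conditional on U = u, the components of A_m = (A^(1),...,A^(m)) are i.i.d. with a distribution depending non-trivially on u, and a consistent estimator Û(A_m) of U exists. Then for any fixed value a_m with Û(a_m) = u, the conditional probability P(Y | U = u', A_m = a_m) for u' ≠ u is not identified from the joint distribution of (A_m, Y) in the limit m → ∞: any value of this conditional probability is consistent with the limiting observed-data distribution. -/
import Mathlib


open Finset Filter

/-- Non-identification under degeneracy: in the discrete multi-cause model
with latent `U` (law `pU`), conditional cause law `k m u ·` and conditional
outcome probabilities `pY m u a = P(Y=1 | U=u, A=a)`, suppose a consistent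
estimator `Û_m` exists (the conditional probability of misclassification
vanishes). Then for any sequence of cause values `a_m` with `Û_m(a_m) = u`,
any `u' ≠ u` and any `t ∈ [0,1]`, there is an alternative outcome model
taking the value `t` at `(u', a_m)` whose implied observable law of `(A, Y)`
agrees with the true one in the limit `m → ∞`: the conditional probability
`P(Y | U = u', A_m = a_m)` is not identified in the limit. -/
theorem conditional_outcome_not_identified_in_limit
    {ι : Type*} [Fintype ι] [DecidableEq ι] (α : ℕ → Type*) [∀ m, Fintype (α m)]
    (pU : ι → ℝ) (hpU : ∀ u, 0 < pU u) (hpUsum : ∑ u, pU u = 1)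
    (u u' : ι) (huu' : u' ≠ u)
    (k : ∀ m, ι → α m → ℝ)
    (hknn : ∀ m v a, 0 ≤ k m v a) (hksum : ∀ m v, ∑ a, k m v a = 1)
    (Uhat : ∀ m, α m → ι)
    (hcons : ∀ v : ι,
      Tendsto (fun m => ∑ a ∈ Finset.univ.filter (fun a => Uhat m a ≠ v), k m v a)
        atTop (nhds 0))
    (pY : ∀ m, ι → α m → ℝ) (hpY : ∀ m v a, pY m v a ∈ Set.Icc (0 : ℝ) 1)
    (am : ∀ m, α m) (ham : ∀ m, Uhat m (am m) = u)
    (t : ℝ) (ht : t ∈ Set.Icc (0 : ℝ) 1) :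
    ∃ pY' : ∀ m, ι → α m → ℝ,
      (∀ m v a, pY' m v a ∈ Set.Icc (0 : ℝ) 1) ∧
      (∀ m, pY' m u' (am m) = t) ∧
      Tendsto
        (fun m => ∑ a : α m,
          |(∑ v, pU v * k m v a * pY' m v a) - (∑ v, pU v * k m v a * pY m v a)|)
        atTop (nhds 0) := by
  classical
  refine ⟨fun m v a => if v = u' ∧ a = am m then t else pY m v a, ?_, ?_, ?_⟩
  · intro m v a
    by_cases h : v = u' ∧ a = am m
    · simp [h, ht]
    · simp [h, hpY m v a]
  · intro m; simp
  · have key : ∀ m, (∑ a : α m,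
        |(∑ v, pU v * k m v a * (if v = u' ∧ a = am m then t else pY m v a))
          - (∑ v, pU v * k m v a * pY m v a)|)
        = pU u' * k m u' (am m) * |t - pY m u' (am m)| := by
      intro m
      rw [Finset.sum_eq_single (am m)]
      · have : (∑ v, pU v * k m v (am m) * (if v = u' ∧ am m = am m then t else pY m v (am m)))
            - (∑ v, pU v * k m v (am m) * pY m v (am m))
            = pU u' * k m u' (am m) * (t - pY m u' (am m)) := by
          rw [← Finset.sum_sub_distrib]
          rw [Finset.sum_eq_single u']
          · simp; ring
          · intro v _ hv
            simp [hv]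
          · simp
        rw [this, abs_mul, abs_of_nonneg (mul_nonneg (hpU u').le (hknn m u' (am m)))]
      · intro a _ ha
        have : ∀ v, (if v = u' ∧ a = am m then t else pY m v a) = pY m v a := by
          intro v; simp [ha]
        simp [this]
      · simp
    simp only [key]
    have hub : ∀ m, pU u' * k m u' (am m) * |t - pY m u' (am m)|
        ≤ pU u' * ∑ a ∈ Finset.univ.filter (fun a => Uhat m a ≠ u'), k m u' a := by
      intro m
      have h1 : |t - pY m u' (am m)| ≤ 1 := by
        rw [abs_le]
        have := hpY m u' (am m)
        constructor <;> [linarith [ht.1, this.2]; linarith [ht.2, this.1]]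
      have h2 : k m u' (am m) ≤ ∑ a ∈ Finset.univ.filter (fun a => Uhat m a ≠ u'), k m u' a := by
        refine Finset.single_le_sum (fun a _ => hknn m u' a) ?_
        simp [ham m, huu'.symm]
      calc pU u' * k m u' (am m) * |t - pY m u' (am m)|
          ≤ pU u' * k m u' (am m) * 1 := by
            apply mul_le_mul_of_nonneg_left h1 (mul_nonneg (hpU u').le (hknn m u' (am m)))
        _ = pU u' * k m u' (am m) := by ring
        _ ≤ pU u' * ∑ a ∈ Finset.univ.filter (fun a => Uhat m a ≠ u'), k m u' a :=
            mul_le_mul_of_nonneg_left h2 (hpU u').le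
    have hlim : Tendsto (fun m => pU u' *
        ∑ a ∈ Finset.univ.filter (fun a => Uhat m a ≠ u'), k m u' a) atTop (nhds 0) := by
      have := (hcons u').const_mul (pU u')
      simpa using this
    exact squeeze_zero (fun m => mul_nonneg (mul_nonneg (hpU u').le (hknn m u' (am m))) (abs_nonneg _)) hub hlim
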